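/- Let Π be a rectagraph and π : Q_n → Π a covering from the n-cube. Suppose 0·π = e_{i,j}·π for some i ≠ j (where e_{i,j} is the weight-2 vector with 1s in coordinates i and j). Then this leads to a contradiction; that is, 0 and e_{i,j} always lie in distinct fibers of π. Equivalently, if C = K^π ∩ 𝔽₂ⁿ is the subgroup of translations in K^π, then C does not contain any vector of weight 2. -/

import Mathlib

/-- The `n`-cube: vertices are vectors in `𝔽₂ⁿ`, adjacent iff at Hamming distance 1. -/
def cube (n : ℕ) : SimpleGraph (Fin n → ZMod 2) where
  Adj x y := hammingDist x y = 1
  symm := ⟨fun x y h => by rwa [hammingDist_comm]⟩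
  loopless := ⟨fun x h => by simp [hammingDist_self] at h⟩

/-- A rectagraph: a connected triangle-free graph in which every 2-arc lies in a
unique quadrangle. -/
def IsRectagraph {V : Type*} (P : SimpleGraph V) : Prop :=
  P.Connected ∧ P.CliqueFree 3 ∧
    ∀ u v w : V, P.Adj v u → P.Adj v w → u ≠ w →
      ∃! x : V, x ≠ v ∧ P.Adj u x ∧ P.Adj w x

/-- `f` is a covering from `G` to `H`. -/
def IsCovering {V W : Type*} (G : SimpleGraph V) (H : SimpleGraph W)
    (f : V → W) : Prop :=
  Function.Surjective f ∧
    ∀ x : V, Set.BijOn f (G.neighborSet x) (H.neighborSet (f x))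

/-- The standard basis vector `e_i` of `𝔽₂ⁿ`. -/
def stdBasis (n : ℕ) (i : Fin n) : Fin n → ZMod 2 :=
  fun k => if k = i then 1 else 0

lemma hamming_filter_card {n : ℕ} (x y : Fin n → ZMod 2) (a : Fin n)
    (h : ∀ k, x k ≠ y k ↔ k = a) : hammingDist x y = 1 := by
  unfold hammingDist
  have : ({k | x k ≠ y k} : Finset (Fin n)) = {a} := by
    ext k
    simp [Finset.mem_filter, h k]
  rw [this, Finset.card_singleton]

/-- If `P` is a rectagraph and `f : Q_n → P` a covering, then `0` and the
weight-2 vector `e_{i,j}` lie in distinct fibers of `f`. -/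
theorem fiber_no_weight_two {n : ℕ} {V : Type*} [Finite V]
    (P : SimpleGraph V) (hP : IsRectagraph P)
    (f : (Fin n → ZMod 2) → V) (hf : IsCovering (cube n) P f)
    (i j : Fin n) (hij : i ≠ j) :
    f (fun k => if k = i ∨ k = j then 1 else 0) ≠ f 0 := by
  intro h
  set v : Fin n → ZMod 2 := fun k => if k = i ∨ k = j then 1 else 0 with hv
  have h1 : (cube n).Adj (stdBasis n i) 0 := by
    show hammingDist _ _ = 1
    apply hamming_filter_card _ _ i
    intro k
    by_cases hk : k = i <;> simp [stdBasis, hk]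
  have h2 : (cube n).Adj (stdBasis n i) v := by
    show hammingDist _ _ = 1
    apply hamming_filter_card _ _ j
    intro k
    rcases eq_or_ne k i with hk | hk
    · subst hk; simp [stdBasis, hv, hij]
    · rcases eq_or_ne k j with hk' | hk' <;> simp [stdBasis, hv, hk, hk', hij.symm]
  have hinj := (hf.2 (stdBasis n i)).injOn
  have : v = 0 := hinj h2 h1 h
  have := congrFun this j
  simp [hv] at this
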